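/- Let H be a discrete distribution function supported on finitely many distinct points Y₁ < Y₂ < ... < Y_n with positive masses, decomposed as H = H₀ + H₁ + H₂ where H_k have jumps only at the points Y_i with δ_i = k for labels δ_i ∈ {0,1,2}. Define F_L(t−) = ∏_{[t,∞)} (1 − ΔH₂(s)/H(s)). Then F_L(t−) − H(t−) ≥ 0 for all t. -/

import Mathlib

open Finset

lemma key_prod (n : ℕ) (Y : Fin n → ℝ) (hY : StrictMono Y)
    (w : Fin n → ℝ) (hw : ∀ i, 0 < w i) (hw1 : ∑ i, w i ≤ 1)
    (H : ℝ → ℝ)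
    (hH : ∀ t, H t = ∑ i ∈ univ.filter (fun i => Y i ≤ t), w i) (k : ℕ) :
    ∑ i ∈ univ.filter (fun i : Fin n => (i : ℕ) < k), w i ≤
      ∏ i ∈ univ.filter (fun i : Fin n => k ≤ (i : ℕ)), (1 - w i / H (Y i)) := by
  by_cases hk : n ≤ k
  · have h1 : univ.filter (fun i : Fin n => k ≤ (i : ℕ)) = ∅ := by
      ext i
      simp only [mem_filter, mem_univ, true_and, Finset.notMem_empty, iff_false]
      have := i.isLt; omega
    have h2 : univ.filter (fun i : Fin n => (i : ℕ) < k) = univ := by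
      ext i
      simp only [mem_filter, mem_univ, true_and, iff_true]
      have := i.isLt; omega
    rw [h1, h2, Finset.prod_empty]
    exact hw1
  · push_neg at hk
    have ih := key_prod n Y hY w hw hw1 H hH (k + 1)
    set kk : Fin n := ⟨k, hk⟩ with hkk
    have hsplit : univ.filter (fun i : Fin n => k ≤ (i : ℕ)) =
        insert kk (univ.filter (fun i : Fin n => k + 1 ≤ (i : ℕ))) := by
      ext i
      simp only [mem_filter, mem_univ, true_and, Finset.mem_insert, Fin.ext_iff]
      have : (kk : ℕ) = k := rfl
      omega
    have hnot : kk ∉ univ.filter (fun i : Fin n => k + 1 ≤ (i : ℕ)) := by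
      simp [hkk]
    have hins2 : univ.filter (fun i : Fin n => (i : ℕ) < k + 1) =
        insert kk (univ.filter (fun i : Fin n => (i : ℕ) < k)) := by
      ext i
      simp only [mem_filter, mem_univ, true_and, Finset.mem_insert, Fin.ext_iff]
      have : (kk : ℕ) = k := rfl
      omega
    have hnot2 : kk ∉ univ.filter (fun i : Fin n => (i : ℕ) < k) := by
      simp [hkk]
    set A := ∑ i ∈ univ.filter (fun i : Fin n => (i : ℕ) < k), w i with hA
    set B := ∑ i ∈ univ.filter (fun i : Fin n => (i : ℕ) < k + 1), w i with hB
    have hAB : B = w kk + A := by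
      rw [hB, hins2, Finset.sum_insert hnot2]
    have hA0 : 0 ≤ A := Finset.sum_nonneg fun i _ => (hw i).le
    have hB0 : 0 < B := by rw [hAB]; linarith [hw kk]
    have hHkk : H (Y kk) = B := by
      rw [hH, hB]
      congr 1
      ext i
      simp only [mem_filter, mem_univ, true_and]
      rw [hY.le_iff_le, Fin.le_def]
      show (i : ℕ) ≤ k ↔ (i : ℕ) < k + 1
      omega
    have hfac : 1 - w kk / H (Y kk) = A / B := by
      rw [hHkk, eq_div_iff hB0.ne', sub_mul, one_mul, div_mul_cancel₀ _ hB0.ne']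
      linarith
    rw [hsplit, Finset.prod_insert hnot, hfac]
    calc A = A / B * B := (div_mul_cancel₀ A hB0.ne').symm
    _ ≤ A / B * ∏ i ∈ univ.filter (fun i : Fin n => k + 1 ≤ (i : ℕ)), (1 - w i / H (Y i)) :=
        mul_le_mul_of_nonneg_left ih (div_nonneg hA0 hB0.le)
termination_by n - k
decreasing_by omega

/-- Discrete setup of Lemma 2.1: `Y₁ < ... < Yₙ` distinct points with positive masses
`wᵢ` summing to at most `1`, labels `δᵢ ∈ {0,1,2}`,
`H(t) = Σᵢ wᵢ 1{Yᵢ ≤ t}`, `H(t−) = Σᵢ wᵢ 1{Yᵢ < t}`, and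
`F_L(t−) = ∏_{i : Yᵢ ≥ t, δᵢ = 2} (1 − wᵢ / H(Yᵢ))`.
Then `F_L(t−) − H(t−) ≥ 0` for all `t`. -/
theorem FL_minus_H_nonneg (n : ℕ) (Y : Fin n → ℝ) (hY : StrictMono Y)
    (w : Fin n → ℝ) (hw : ∀ i, 0 < w i) (hw1 : ∑ i, w i ≤ 1)
    (δ : Fin n → Fin 3)
    (H Hminus FLminus : ℝ → ℝ)
    (hH : ∀ t, H t = ∑ i ∈ univ.filter (fun i => Y i ≤ t), w i)
    (hHm : ∀ t, Hminus t = ∑ i ∈ univ.filter (fun i => Y i < t), w i)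
    (hFL : ∀ t, FLminus t = ∏ i ∈ univ.filter (fun i => t ≤ Y i ∧ δ i = 2),
        (1 - w i / H (Y i))) :
    ∀ t : ℝ, 0 ≤ FLminus t - Hminus t := by
  intro t
  -- find k with Y i < t ↔ i < k
  obtain ⟨k, hk⟩ : ∃ k : ℕ, ∀ i : Fin n, Y i < t ↔ (i : ℕ) < k := by
    by_cases hne : (univ.filter fun i : Fin n => t ≤ Y i).Nonempty
    · refine ⟨((univ.filter fun i : Fin n => t ≤ Y i).min' hne : Fin n), fun i => ?_⟩
      set j := (univ.filter fun i : Fin n => t ≤ Y i).min' hne with hj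
      constructor
      · intro h
        by_contra hc
        push_neg at hc
        have : Y j ≤ Y i := hY.le_iff_le.mpr (Fin.le_def.mpr hc)
        have htj : t ≤ Y j := (mem_filter.mp ((univ.filter fun i : Fin n => t ≤ Y i).min'_mem hne)).2
        linarith
      · intro h
        by_contra hc
        push_neg at hc
        have : j ≤ i := Finset.min'_le _ _ (by simp [hc])
        exact absurd h (by omega)
    · refine ⟨n, fun i => ?_⟩
      rw [Finset.not_nonempty_iff_eq_empty] at hne
      have : i ∉ (univ.filter fun i : Fin n => t ≤ Y i) := hne ▸ Finset.notMem_empty i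
      simp only [mem_filter, mem_univ, true_and] at this
      exact ⟨fun _ => i.isLt, fun _ => lt_of_not_ge this⟩
  have hk' : ∀ i : Fin n, t ≤ Y i ↔ k ≤ (i : ℕ) := by
    intro i
    rw [← not_lt, ← not_lt, not_iff_not]
    exact hk i
  -- each factor in [0,1]
  have hfac : ∀ i : Fin n, 0 ≤ 1 - w i / H (Y i) ∧ 1 - w i / H (Y i) ≤ 1 := by
    intro i
    have hHi : H (Y i) = ∑ j ∈ univ.filter (fun j => Y j ≤ Y i), w j := hH _
    have hmem : i ∈ univ.filter (fun j => Y j ≤ Y i) := by simp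
    have hwle : w i ≤ H (Y i) := hHi ▸ Finset.single_le_sum (fun j _ => (hw j).le) hmem
    have hHpos : 0 < H (Y i) := lt_of_lt_of_le (hw i) hwle
    constructor
    · have : w i / H (Y i) ≤ 1 := (div_le_one hHpos).mpr hwle
      linarith
    · have : 0 ≤ w i / H (Y i) := div_nonneg (hw i).le hHpos.le
      linarith
  -- rewrite Hminus
  have hHmt : Hminus t = ∑ i ∈ univ.filter (fun i : Fin n => (i : ℕ) < k), w i := by
    rw [hHm]; congr 1; ext i; simp only [mem_filter, mem_univ, true_and]; exact hk i
  set S := univ.filter (fun i : Fin n => t ≤ Y i ∧ δ i = 2) with hS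
  set T := univ.filter (fun i : Fin n => k ≤ (i : ℕ)) with hT
  have hsub : S ⊆ T := by
    intro i hi
    simp only [hS, hT, mem_filter, mem_univ, true_and] at hi ⊢
    exact (hk' i).mp hi.1
  have hprod : ∏ i ∈ T, (1 - w i / H (Y i)) =
      (∏ i ∈ T \ S, (1 - w i / H (Y i))) * ∏ i ∈ S, (1 - w i / H (Y i)) :=
    (Finset.prod_sdiff hsub).symm
  have hdiff1 : ∏ i ∈ T \ S, (1 - w i / H (Y i)) ≤ 1 :=
    Finset.prod_le_one (fun i _ => (hfac i).1) (fun i _ => (hfac i).2)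
  have hSnn : 0 ≤ ∏ i ∈ S, (1 - w i / H (Y i)) :=
    Finset.prod_nonneg fun i _ => (hfac i).1
  have hchain : Hminus t ≤ FLminus t := by
    rw [hHmt, hFL]
    calc ∑ i ∈ univ.filter (fun i : Fin n => (i : ℕ) < k), w i
        ≤ ∏ i ∈ T, (1 - w i / H (Y i)) := key_prod n Y hY w hw hw1 H hH k
      _ = (∏ i ∈ T \ S, (1 - w i / H (Y i))) * ∏ i ∈ S, (1 - w i / H (Y i)) := hprod
      _ ≤ 1 * ∏ i ∈ S, (1 - w i / H (Y i)) := mul_le_mul_of_nonneg_right hdiff1 hSnn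
      _ = ∏ i ∈ S, (1 - w i / H (Y i)) := one_mul _
  linarith
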